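/- Let p be an odd prime, τ = −e^{iπ/p} (so τ^p = 1), and let α, β, γ, δ ∈ Z_p with αδ − βγ = 1, β ≠ 0, and α + δ ≠ 2 in Z_p. Define the p×p matrix V_F with entries (V_F)_{r,s} = p^{−1/2} τ^{n(r,s)} for r, s ∈ Z_p, where n(r,s) is any integer congruent modulo p to β⁻¹(α s² − 2 r s + δ r²) (β⁻¹ the inverse of β in Z_p). Then |tr(V_F)| = 1. -/

import Mathlib

noncomputable section

open Complex Matrix

/-- `τ = −e^{iπ/p}` (a primitive `p`-th root of unity for odd `p`). -/
def τc (p : ℕ) : ℂ := -Complex.exp ((Real.pi : ℂ) * Complex.I / (p : ℂ))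

/-- The Clifford-group unitary `V_F` (up to phase) associated with
`F = [[α, β], [γ, δ]] ∈ SL(2, Z_p)` with `β ≠ 0`: entries
`(V_F)_{r,s} = p^{−1/2} τ^{β⁻¹(α s² − 2 r s + δ r²)}`.  Since `τ^p = 1` for odd `p`, the
exponent may be taken to be any integer congruent to `β⁻¹(α s² − 2 r s + δ r²)` mod `p`;
we use the canonical representative `ZMod.val`. -/
def VF (p : ℕ) (α β γ δ : ZMod p) : Matrix (Fin p) (Fin p) ℂ :=
  Matrix.of fun r s : Fin p =>
    (1 / (Real.sqrt p : ℂ)) *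
      τc p ^ (β⁻¹ * (α * ((s : ℕ) : ZMod p) ^ 2 - 2 * ((r : ℕ) : ZMod p) * ((s : ℕ) : ZMod p)
          + δ * ((r : ℕ) : ZMod p) ^ 2)).val

section aux
variable (p : ℕ) [Fact p.Prime]

lemma tau_order (hodd : Odd p) : orderOf (τc p) = p := by
  have hp := (Fact.out : p.Prime)
  have hτp : τc p ^ p = 1 := by
    have hp0 : (p:ℂ) ≠ 0 := Nat.cast_ne_zero.mpr hp.pos.ne'
    unfold τc
    rw [neg_pow, ← Complex.exp_nat_mul]
    have : (p:ℂ) * ((Real.pi : ℂ) * Complex.I / (p : ℂ)) = (Real.pi:ℂ) * Complex.I := by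
      field_simp
    rw [this, Complex.exp_pi_mul_I, hodd.neg_one_pow]; ring
  have hτ1 : τc p ≠ 1 := by
    intro h
    have h2 : Complex.exp ((Real.pi : ℂ) * Complex.I / (p : ℂ)) = -1 := by
      have := congrArg Neg.neg h
      simpa [τc] using this
    have harg : (Real.pi : ℂ) * Complex.I / (p : ℂ) = ((Real.pi / p : ℝ) : ℂ) * Complex.I := by
      push_cast; ring
    rw [harg] at h2
    have him := congrArg Complex.im h2
    rw [Complex.exp_ofReal_mul_I_im] at him
    have hpos : 0 < Real.sin (Real.pi / p) := by
      apply Real.sin_pos_of_pos_of_lt_pi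
      · have : (0:ℝ) < p := by exact_mod_cast hp.pos
        positivity
      · calc Real.pi / p < Real.pi / 1 :=
              div_lt_div_of_pos_left Real.pi_pos one_pos (by exact_mod_cast hp.one_lt)
        _ = Real.pi := by ring
    simp at him; linarith
  have h1 : orderOf (τc p) ∣ p := orderOf_dvd_of_pow_eq_one hτp
  rcases (Nat.Prime.eq_one_or_self_of_dvd hp _ h1) with h | h
  · exact absurd (orderOf_eq_one_iff.mp h) hτ1
  · exact h

/-- the additive character `a ↦ τ^a.val` -/
def ψ (a : ZMod p) : ℂ := τc p ^ a.val

variable (hodd : Odd p)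
include hodd

lemma ψ_add (a b : ZMod p) : ψ p (a + b) = ψ p a * ψ p b := by
  unfold ψ
  have h := pow_mod_orderOf (τc p) (a.val + b.val)
  rw [tau_order p hodd] at h
  rw [ZMod.val_add, h, pow_add]

omit hodd in
lemma ψ_zero : ψ p 0 = 1 := by simp [ψ]

omit hodd [Fact p.Prime] in
lemma ψ_abs (a : ZMod p) : ‖ψ p a‖ = 1 := by
  have habs : ‖τc p‖ = 1 := by
    have : ((Real.pi : ℂ) * Complex.I / (p : ℂ)).re = 0 := by simp [Complex.div_re]
    simp [ψ, τc, Complex.norm_exp, this]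
  simp [ψ, map_pow, habs]

lemma ψ_conj (a : ZMod p) : (starRingEnd ℂ) (ψ p a) = ψ p (-a) := by
  have h1 : ψ p a * ψ p (-a) = 1 := by
    rw [← ψ_add p hodd, add_neg_cancel, ψ_zero p]
  have h2 : ψ p a * (starRingEnd ℂ) (ψ p a) = 1 := by
    rw [Complex.mul_conj, Complex.normSq_eq_norm_sq, ψ_abs p]; norm_num
  rw [← inv_eq_of_mul_eq_one_right h1, ← inv_eq_of_mul_eq_one_right h2]

omit hodd in
lemma ψ_fin_sum (f : ZMod p → ℂ) :
    ∑ a : ZMod p, f a = ∑ i : Fin p, f ((i : ℕ) : ZMod p) := by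
  apply Finset.sum_nbij' (fun a => (⟨a.val, a.val_lt⟩ : Fin p)) (fun i => ((i : ℕ) : ZMod p))
  · intros; simp
  · intros; simp
  · intro a _; simp [ZMod.natCast_val]
  · intro i _
    apply Fin.ext
    simp [ZMod.val_natCast_of_lt i.isLt]
  · intro a _
    simp [ZMod.natCast_val]

lemma ψ_sum : ∑ a : ZMod p, ψ p a = 0 := by
  have hp := (Fact.out : p.Prime)
  have hτ1 : τc p ≠ 1 := by
    intro h
    have := tau_order p hodd
    rw [h, orderOf_one] at this
    exact hp.one_lt.ne this
  have hτp : τc p ^ p = 1 := by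
    have h := pow_orderOf_eq_one (τc p)
    rwa [tau_order p hodd] at h
  rw [ψ_fin_sum]
  have h1 : ∀ i : Fin p, ψ p ((i:ℕ) : ZMod p) = τc p ^ (i:ℕ) := by
    intro i; unfold ψ; rw [ZMod.val_natCast_of_lt i.isLt]
  simp_rw [h1]
  rw [← Finset.sum_range (fun k => τc p ^ k), geom_sum_eq hτ1, hτp]
  simp

lemma ψ_mul_sum (b : ZMod p) (hb : b ≠ 0) : ∑ a : ZMod p, ψ p (b * a) = 0 := by
  rw [Fintype.sum_bijective (fun a => b * a) (mulLeft_bijective₀ b hb) _ (ψ p) (fun a => rfl)]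
  exact ψ_sum p hodd

end aux

/-- For an odd prime `p` and `F = [[α, β], [γ, δ]] ∈ SL(2, Z_p)` with
`β ≠ 0` and `α + δ ≠ 2`, the associated Clifford unitary satisfies `|tr(V_F)| = 1`. -/
theorem abs_trace_VF_eq_one (p : ℕ) (hp : p.Prime) (hodd : Odd p)
    (α β γ δ : ZMod p) (hdet : α * δ - β * γ = 1) (hβ : β ≠ 0) (htr : α + δ ≠ 2) :
    ‖Matrix.trace (VF p α β γ δ)‖ = 1 := by
  haveI : Fact p.Prime := ⟨hp⟩
  set c : ZMod p := β⁻¹ * (α + δ - 2) with hc_def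
  have hc : c ≠ 0 := mul_ne_zero (inv_ne_zero hβ) (sub_ne_zero.mpr htr)
  have h2ne : (2 : ZMod p) ≠ 0 := by
    have h22 : ((2:ℕ) : ZMod p) = (2 : ZMod p) := by norm_cast
    rw [← h22, Ne, ZMod.natCast_eq_zero_iff]
    intro hdvd
    have hp2 : p = 2 := (Nat.prime_dvd_prime_iff_eq hp Nat.prime_two).mp hdvd
    rw [hp2] at hodd
    simp [Nat.odd_iff] at hodd
  set S : ℂ := ∑ x : ZMod p, ψ p (c * x ^ 2) with hS_def
  -- trace identity
  have hdiag : ∀ i : Fin p, VF p α β γ δ i i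
      = (1 / (Real.sqrt p : ℂ)) * ψ p (c * ((i : ℕ) : ZMod p) ^ 2) := by
    intro i
    show (1 / (Real.sqrt p : ℂ)) *
      τc p ^ (β⁻¹ * (α * ((i : ℕ) : ZMod p) ^ 2 - 2 * ((i : ℕ) : ZMod p) * ((i : ℕ) : ZMod p)
          + δ * ((i : ℕ) : ZMod p) ^ 2)).val = _
    have harg : β⁻¹ * (α * ((i : ℕ) : ZMod p) ^ 2 - 2 * ((i : ℕ) : ZMod p) * ((i : ℕ) : ZMod p)
          + δ * ((i : ℕ) : ZMod p) ^ 2) = c * ((i : ℕ) : ZMod p) ^ 2 := by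
      rw [hc_def]; ring
    rw [harg]; rfl
  have htrace : Matrix.trace (VF p α β γ δ) = (1 / (Real.sqrt p : ℂ)) * S := by
    calc Matrix.trace (VF p α β γ δ)
        = ∑ i : Fin p, VF p α β γ δ i i := rfl
      _ = ∑ i : Fin p, (1 / (Real.sqrt p : ℂ)) * ψ p (c * ((i : ℕ) : ZMod p) ^ 2) :=
          Finset.sum_congr rfl fun i _ => hdiag i
      _ = (1 / (Real.sqrt p : ℂ)) * ∑ i : Fin p, ψ p (c * ((i : ℕ) : ZMod p) ^ 2) :=
          (Finset.mul_sum _ _ _).symm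
      _ = (1 / (Real.sqrt p : ℂ)) * S := by
          rw [hS_def, ψ_fin_sum p (fun x => ψ p (c * x ^ 2))]
  -- Gauss sum magnitude
  have hconjS : (starRingEnd ℂ) S = ∑ y : ZMod p, ψ p (-(c * y ^ 2)) := by
    rw [hS_def, map_sum]
    exact Finset.sum_congr rfl fun y _ => ψ_conj p hodd _
  have hSS : S * (starRingEnd ℂ) S = (p : ℂ) := by
    rw [hconjS, hS_def, Finset.sum_mul_sum]
    have h2 : ∀ y : ZMod p, ∑ x : ZMod p, ψ p (c * x ^ 2 - c * y ^ 2)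
        = ∑ d : ZMod p, ψ p (c * d ^ 2) * ψ p ((2 * c * d) * y) := by
      intro y
      rw [← Fintype.sum_equiv (Equiv.addLeft y)
        (fun d => ψ p (c * (y + d) ^ 2 - c * y ^ 2))
        (fun x => ψ p (c * x ^ 2 - c * y ^ 2)) (fun d => rfl)]
      apply Finset.sum_congr rfl
      intro d _
      rw [← ψ_add p hodd]
      congr 1
      ring
    calc ∑ x : ZMod p, ∑ y : ZMod p, ψ p (c * x ^ 2) * ψ p (-(c * y ^ 2))
        = ∑ y : ZMod p, ∑ x : ZMod p, ψ p (c * x ^ 2 - c * y ^ 2) := by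
          rw [Finset.sum_comm]
          apply Finset.sum_congr rfl; intro y _
          apply Finset.sum_congr rfl; intro x _
          rw [← ψ_add p hodd]
          congr 1
          ring
      _ = ∑ y : ZMod p, ∑ d : ZMod p, ψ p (c * d ^ 2) * ψ p ((2 * c * d) * y) :=
          Finset.sum_congr rfl fun y _ => h2 y
      _ = ∑ d : ZMod p, ∑ y : ZMod p, ψ p (c * d ^ 2) * ψ p ((2 * c * d) * y) :=
          Finset.sum_comm
      _ = ∑ d : ZMod p, ψ p (c * d ^ 2) * ∑ y : ZMod p, ψ p ((2 * c * d) * y) := by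
          simp_rw [Finset.mul_sum]
      _ = (p : ℂ) := by
          rw [Finset.sum_eq_single 0]
          · have hψ0 : ψ p (c * (0:ZMod p) ^ 2) = 1 := by
              rw [show c * (0:ZMod p)^2 = 0 by ring, ψ_zero p]
            have : ∀ y : ZMod p, ψ p ((2 * c * (0:ZMod p)) * y) = 1 := by
              intro y
              rw [show (2 * c * (0:ZMod p)) * y = 0 by ring, ψ_zero p]
            simp_rw [hψ0, this]
            simp [ZMod.card]
          · intro d _ hd
            have h2cd : 2 * c * d ≠ 0 := mul_ne_zero (mul_ne_zero h2ne hc) hd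
            rw [ψ_mul_sum p hodd _ h2cd, mul_zero]
          · intro h; exact absurd (Finset.mem_univ 0) h
  have hnorm : Complex.normSq S = (p : ℝ) := by
    have := hSS
    rw [Complex.mul_conj] at this
    exact_mod_cast this
  have habsS : ‖S‖ = Real.sqrt p := by
    rw [Complex.norm_def, hnorm]
  have hsne : Real.sqrt p ≠ 0 := by
    have : (0:ℝ) < p := by exact_mod_cast hp.pos
    positivity
  rw [htrace, norm_mul, habsS, norm_div, norm_one, Complex.norm_real, Real.norm_eq_abs,
    _root_.abs_of_nonneg (Real.sqrt_nonneg _)]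
  field_simp
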